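/- Let s ∈ (0,1). Then P.V. ∫_ℝ (1 − |t|^s)/|1 − t|^{2+s} dt = 0, where the principal value is taken by excising the interval (1−ε, 1+ε) and letting ε → 0⁺. -/

import Mathlib

open MeasureTheory Set Filter

theorem pv_key (s : ℝ) (x : ℝ) (hx : x ≠ 0) (hx1 : x ≠ 1) :
    |(-(x^2)⁻¹)| • ((1 - |x⁻¹| ^ s) / |1 - x⁻¹| ^ (2 + s))
      = -((1 - |x| ^ s) / |1 - x| ^ (2 + s)) := by
  have hax : (0:ℝ) < |x| := abs_pos.mpr hx
  have h1x : (0:ℝ) < |1 - x| := abs_pos.mpr (sub_ne_zero.mpr (Ne.symm hx1))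
  have habs : |1 - x⁻¹| = |1 - x| / |x| := by
    rw [eq_div_iff hax.ne', ← abs_mul, show (1 - x⁻¹) * x = x - 1 by field_simp,
      abs_sub_comm]
  have hinv : |x⁻¹| = |x|⁻¹ := abs_inv x
  rw [habs, hinv, Real.div_rpow h1x.le (abs_nonneg x), Real.inv_rpow (abs_nonneg x),
    abs_neg, abs_inv, abs_pow]
  have h2s : |x| ^ (2 + s) = |x| ^ (2:ℕ) * |x| ^ s := by
    rw [← Real.rpow_natCast |x| 2, ← Real.rpow_add hax]
    norm_num
  have hxs : (0:ℝ) < |x| ^ s := Real.rpow_pos_of_pos hax s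
  have h1xs : (0:ℝ) < |1 - x| ^ (2 + s) := Real.rpow_pos_of_pos h1x _
  rw [smul_eq_mul, h2s]
  field_simp
  ring

theorem pv_preimage (ε : ℝ) (h0 : 0 < ε) (h1 : ε < 1) :
    (Inv.inv : ℝ → ℝ) ⁻¹' (Ioo (1-ε) (1+ε)) = Ioo (1+ε)⁻¹ (1-ε)⁻¹ := by
  have he : (0:ℝ) < 1 - ε := by linarith
  have he' : (0:ℝ) < 1 + ε := by linarith
  have hea : (1-ε) * (1-ε)⁻¹ = 1 := mul_inv_cancel₀ he.ne'
  have heb : (1+ε) * (1+ε)⁻¹ = 1 := mul_inv_cancel₀ he'.ne'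
  ext x
  simp only [mem_preimage, mem_Ioo]
  constructor
  · rintro ⟨ha, hb⟩
    have hx : 0 < x := inv_pos.mp (lt_trans he ha)
    have hxx : x * x⁻¹ = 1 := mul_inv_cancel₀ hx.ne'
    constructor
    · nlinarith [mul_pos hx (inv_pos.mpr he')]
    · nlinarith [mul_pos hx (inv_pos.mpr he)]
  · rintro ⟨ha, hb⟩
    have hx : 0 < x := lt_trans (inv_pos.mpr he') ha
    have hxx : x * x⁻¹ = 1 := mul_inv_cancel₀ hx.ne'
    have hxi : 0 < x⁻¹ := inv_pos.mpr hx
    constructor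
    · nlinarith [mul_pos hxi (inv_pos.mpr he')]
    · nlinarith [mul_pos hxi (inv_pos.mpr he)]

theorem pv_cont (s : ℝ) (hs0 : 0 < s) :
    ∀ x : ℝ, x ≠ 1 → ContinuousAt (fun t : ℝ => (1 - |t| ^ s) / |1 - t| ^ (2 + s)) x := by
  intro x hx
  have hc : ∀ (c : ℝ), 0 < c → Continuous (fun t : ℝ => |t| ^ c) := by
    intro c hc
    rw [continuous_iff_continuousAt]
    intro y
    exact (Real.continuousAt_rpow_const _ _ (Or.inr hc.le)).comp continuous_abs.continuousAt
  apply ContinuousAt.div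
  · exact (continuous_const.sub (hc s hs0)).continuousAt
  · exact ((hc (2+s) (by linarith)).comp (continuous_const.sub continuous_id)).continuousAt
  · exact (Real.rpow_pos_of_pos (abs_pos.mpr (sub_ne_zero.mpr (Ne.symm hx))) _).ne'

theorem pv_tail_bound (s : ℝ) (hs : s ∈ Ioo (0:ℝ) 1) (x : ℝ) (hx : 2 ≤ |x|) :
    ‖(1 - |x| ^ s) / |1 - x| ^ (2 + s)‖ ≤ 16 * |x| ^ (-2:ℝ) := by
  have hx0 : (0:ℝ) < |x| := by linarith
  have hx1 : (1:ℝ) ≤ |x| := by linarith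
  have h1x : |x| / 2 ≤ |1 - x| := by
    rw [abs_sub_comm]
    have := abs_sub_abs_le_abs_sub x 1
    simp only [abs_one] at this
    linarith [abs_nonneg (x - 1)]
  have hnum : |1 - |x| ^ s| ≤ 2 * |x| ^ s := by
    have h1 : (1:ℝ) ≤ |x| ^ s := Real.one_le_rpow hx1 hs.1.le
    rw [abs_sub_comm, abs_of_nonneg (by linarith)]
    linarith
  have hden : |x| ^ (2+s) / 8 ≤ |1 - x| ^ (2 + s) := by
    have h1 : (|x| / 2) ^ (2+s) ≤ |1 - x| ^ (2+s) :=
      Real.rpow_le_rpow (by positivity) h1x (by linarith [hs.1])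
    have h2 : (|x| / 2) ^ (2+s) = |x| ^ (2+s) / 2 ^ (2+s) :=
      Real.div_rpow (abs_nonneg x) (by norm_num : (0:ℝ) ≤ 2) _
    have h3 : (2:ℝ) ^ (2+s) ≤ 8 := by
      calc (2:ℝ) ^ (2+s) ≤ 2 ^ (3:ℝ) :=
            Real.rpow_le_rpow_of_exponent_le one_le_two (by linarith [hs.2])
        _ = 8 := by
            rw [show (3:ℝ) = ((3:ℕ):ℝ) by norm_num, Real.rpow_natCast]; norm_num
    have h4 : (0:ℝ) < |x| ^ (2+s) := Real.rpow_pos_of_pos hx0 _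
    rw [h2] at h1
    have h5 : |x| ^ (2+s) / 8 ≤ |x| ^ (2+s) / 2 ^ (2+s) := by
      apply div_le_div_of_nonneg_left h4.le (by positivity) h3
    linarith
  have hdpos : (0:ℝ) < |1 - x| ^ (2+s) := lt_of_lt_of_le (by positivity) hden
  rw [Real.norm_eq_abs, abs_div, abs_of_nonneg hdpos.le]
  calc |1 - |x| ^ s| / |1 - x| ^ (2+s) ≤ (2 * |x| ^ s) / (|x| ^ (2+s) / 8) := by
        apply div_le_div₀ (by positivity) hnum (by positivity) hden
    _ = 16 * (|x| ^ s / |x| ^ (2+s)) := by ring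
    _ = 16 * |x| ^ (-2:ℝ) := by
        rw [← Real.rpow_sub hx0]; norm_num

theorem pv_integrableOn_Ioi (s : ℝ) (hs : s ∈ Ioo (0:ℝ) 1) :
    IntegrableOn (fun t : ℝ => (1 - |t| ^ s) / |1 - t| ^ (2 + s)) (Ioi 2) := by
  have hm : Measurable (fun t : ℝ => (1 - |t| ^ s) / |1 - t| ^ (2 + s)) := by fun_prop
  apply Integrable.mono' (g := fun x : ℝ => 16 * x ^ (-2:ℝ))
  · exact (integrableOn_Ioi_rpow_of_lt (by norm_num) (by norm_num : (0:ℝ) < 2)).const_mul 16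
  · exact hm.aestronglyMeasurable.restrict
  · rw [ae_restrict_iff' measurableSet_Ioi]
    apply ae_of_all
    intro x hx
    rw [mem_Ioi] at hx
    have hax : |x| = x := abs_of_pos (by linarith)
    have h := pv_tail_bound s hs x (by rw [hax]; linarith)
    rw [hax]
    rw [hax] at h
    exact h

theorem pv_integrableOn_Iio (s : ℝ) (hs : s ∈ Ioo (0:ℝ) 1) :
    IntegrableOn (fun t : ℝ => (1 - |t| ^ s) / |1 - t| ^ (2 + s)) (Iio (-2)) := by
  have hm : Measurable (fun t : ℝ => (1 - |t| ^ s) / |1 - t| ^ (2 + s)) := by fun_prop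
  have himg : (Neg.neg : ℝ → ℝ) '' Ioi 2 = Iio (-2) := by
    rw [Set.image_neg_eq_neg, Set.neg_Ioi]
  rw [← himg]
  rw [MeasureTheory.integrableOn_image_iff_integrableOn_abs_deriv_smul measurableSet_Ioi
    (f' := fun _ => (-1:ℝ))
    (fun x _ => (hasDerivAt_neg x).hasDerivWithinAt) neg_injective.injOn]
  simp only [abs_neg, abs_one, one_smul]
  apply Integrable.mono' (g := fun x : ℝ => 16 * x ^ (-2:ℝ))
  · exact (integrableOn_Ioi_rpow_of_lt (by norm_num) (by norm_num : (0:ℝ) < 2)).const_mul 16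
  · exact (Measurable.aestronglyMeasurable (by fun_prop)).restrict
  · rw [ae_restrict_iff' measurableSet_Ioi]
    apply ae_of_all
    intro x hx
    rw [mem_Ioi] at hx
    have hax : |x| = x := abs_of_pos (by linarith)
    have h := pv_tail_bound s hs (-x) (by rw [abs_neg, hax]; linarith)
    rw [abs_neg, hax] at h
    rw [hax]
    exact h

theorem pv_integrableOn (s ε : ℝ) (hs : s ∈ Ioo (0:ℝ) 1) (hε : 0 < ε) :
    IntegrableOn (fun t : ℝ => (1 - |t| ^ s) / |1 - t| ^ (2 + s))
      ((Ioo (1-ε) (1+ε))ᶜ) := by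
  have hsub : (Ioo (1-ε) (1+ε))ᶜ ⊆
      (Icc (-2:ℝ) 2 ∩ (Ioo (1-ε) (1+ε))ᶜ) ∪ (Iio (-2) ∪ Ioi 2) := by
    intro x hx
    by_cases h : x ∈ Icc (-2:ℝ) 2
    · exact Or.inl ⟨h, hx⟩
    · simp only [mem_Icc, not_and_or, not_le] at h
      rcases h with h | h
      · exact Or.inr (Or.inl h)
      · exact Or.inr (Or.inr h)
  apply IntegrableOn.mono_set _ hsub
  apply IntegrableOn.union
  · apply ContinuousOn.integrableOn_compact
    · exact isCompact_Icc.inter_right isOpen_Ioo.isClosed_compl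
    · intro x hx
      have hx1 : x ≠ 1 := by
        intro h
        exact hx.2 (by rw [h]; exact ⟨by linarith, by linarith⟩)
      exact (pv_cont s hs.1 x hx1).continuousWithinAt
  · exact (pv_integrableOn_Iio s hs).union (pv_integrableOn_Ioi s hs)

theorem pv_main_bound (s ε : ℝ) (hs : s ∈ Ioo (0:ℝ) 1) (h0 : 0 < ε) (h2 : ε < 1/2) :
    ‖∫ t in (Ioo (1 - ε) (1 + ε))ᶜ, (1 - |t| ^ s) / |1 - t| ^ (2 + s)‖
      ≤ 10 * ε ^ (1 - s) := by
  set g : ℝ → ℝ := fun t => (1 - |t| ^ s) / |1 - t| ^ (2 + s) with hg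
  set a : ℝ := (1+ε)⁻¹ with ha
  set b : ℝ := (1-ε)⁻¹ with hb
  have he : (0:ℝ) < 1 - ε := by linarith
  have he' : (0:ℝ) < 1 + ε := by linarith
  have haa : a * (1+ε) = 1 := inv_mul_cancel₀ he'.ne'
  have hbb : b * (1-ε) = 1 := inv_mul_cancel₀ he.ne'
  have ha0 : 0 < a := inv_pos.mpr he'
  have hb0 : 0 < b := inv_pos.mpr he
  have ha1 : a < 1 := by nlinarith
  have ha2 : 1 - ε < a := by nlinarith
  have ha3 : (1:ℝ)/2 ≤ a := by nlinarith
  have hb1 : 1 + ε < b := by nlinarith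
  have hb2 : b ≤ 2 := by nlinarith
  have hb3 : b - (1+ε) ≤ 2 * ε^2 := by nlinarith
  have ha4 : a - (1-ε) ≤ ε^2 := by nlinarith
  set A : Set ℝ := (Ioo (1-ε) (1+ε))ᶜ with hA
  set B : Set ℝ := (Ioo a b)ᶜ with hB
  have hmeasA : MeasurableSet A := measurableSet_Ioo.compl
  have hmeasB : MeasurableSet B := measurableSet_Ioo.compl
  -- change of variables
  have hS : MeasurableSet (A \ {0}) := hmeasA.diff (measurableSet_singleton 0)
  have hpre0 : (Inv.inv : ℝ → ℝ) ⁻¹' ({0} : Set ℝ) = ({0} : Set ℝ) := by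
    ext x
    simp [inv_eq_zero]
  have hximg : (Inv.inv : ℝ → ℝ) '' (A \ {0}) = B \ {0} := by
    rw [Set.image_eq_preimage_of_inverse (fun x => inv_inv x) (fun x => inv_inv x),
      Set.preimage_diff, hA, hB, Set.preimage_compl, pv_preimage ε h0 (by linarith), hpre0]
  have hAe : (A \ {0} : Set ℝ) =ᵐ[volume] (A : Set ℝ) :=
    diff_ae_eq_self.mpr (measure_mono_null (Set.inter_subset_right : (A ∩ {0} : Set ℝ) ⊆ {0})
      (measure_singleton 0))
  have hBe : (B \ {0} : Set ℝ) =ᵐ[volume] (B : Set ℝ) :=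
    diff_ae_eq_self.mpr (measure_mono_null (Set.inter_subset_right : (B ∩ {0} : Set ℝ) ⊆ {0})
      (measure_singleton 0))
  have hcov : ∫ t in B, g t = - ∫ t in A, g t := by
    have h1 : ∫ t in (Inv.inv : ℝ → ℝ) '' (A \ {0}), g t
        = ∫ x in A \ {0}, |(-(x^2)⁻¹)| • g x⁻¹ := by
      apply MeasureTheory.integral_image_eq_integral_abs_deriv_smul hS
        (fun x hx => (hasDerivAt_inv hx.2).hasDerivWithinAt) (inv_injective.injOn)
    rw [hximg] at h1
    rw [setIntegral_congr_set hBe] at h1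
    rw [h1]
    have h2 : ∫ x in A \ {0}, |(-(x^2)⁻¹)| • g x⁻¹ = ∫ x in A \ {0}, -g x := by
      apply setIntegral_congr_fun hS
      intro x hx
      have hx1 : x ≠ 1 := by
        intro h
        exact hx.1 (by rw [h]; exact ⟨by linarith, by linarith⟩)
      exact pv_key s x hx.2 hx1
    rw [h2, integral_neg, setIntegral_congr_set hAe]
  -- integrability
  have hintA : IntegrableOn g A := pv_integrableOn s ε hs h0
  have hcont1 : IntegrableOn g (Ico (1+ε) b) := by
    apply IntegrableOn.mono_set _ Ico_subset_Icc_self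
    apply ContinuousOn.integrableOn_compact isCompact_Icc
    intro x hx
    exact (pv_cont s hs.1 x (by intro h; rw [h] at hx; exact absurd hx.1 (by linarith))).continuousWithinAt
  have hcont2 : IntegrableOn g (Ioc (1-ε) a) := by
    apply IntegrableOn.mono_set _ Ioc_subset_Icc_self
    apply ContinuousOn.integrableOn_compact isCompact_Icc
    intro x hx
    exact (pv_cont s hs.1 x (by intro h; rw [h] at hx; exact absurd hx.2 (by linarith))).continuousWithinAt
  -- set decompositions
  have hAB : A \ B = Ico (1+ε) b := by
    rw [hA, hB]
    ext x
    simp only [mem_diff, mem_compl_iff, mem_Ioo, mem_Ico, not_not]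
    push_neg
    constructor
    · rintro ⟨h1, hab1, hab2⟩
      exact ⟨h1 (by linarith), hab2⟩
    · rintro ⟨h1, h2⟩
      exact ⟨fun _ => by linarith, by linarith, h2⟩
  have hBA : B \ A = Ioc (1-ε) a := by
    rw [hA, hB]
    ext x
    simp only [mem_diff, mem_compl_iff, mem_Ioo, mem_Ioc, not_not]
    push_neg
    constructor
    · rintro ⟨h1, hab1, hab2⟩
      refine ⟨hab1, ?_⟩
      by_contra h4
      push_neg at h4
      have := h1 h4
      linarith
    · rintro ⟨h1, h2⟩
      exact ⟨fun hax => absurd hax (not_lt.mpr h2), h1, by linarith⟩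
  have hintAB : IntegrableOn g (A ∩ B) := hintA.mono_set inter_subset_left
  have hintB : IntegrableOn g B := by
    have : B = (A ∩ B) ∪ (B \ A) := by rw [Set.inter_comm]; exact (Set.inter_union_diff B A).symm
    rw [this]
    exact hintAB.union (hBA ▸ hcont2)
  -- splitting
  have hsplitA : ∫ t in A, g t = (∫ t in A ∩ B, g t) + ∫ t in A \ B, g t := by
    rw [← MeasureTheory.setIntegral_union (Set.disjoint_sdiff_right.mono_left inter_subset_right)
      (hmeasA.diff hmeasB) hintAB (hAB ▸ hcont1), Set.inter_union_diff]
  have hsplitB : ∫ t in B, g t = (∫ t in A ∩ B, g t) + ∫ t in B \ A, g t := by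
    rw [← MeasureTheory.setIntegral_union (Set.disjoint_sdiff_right.mono_left inter_subset_left)
      (hmeasB.diff hmeasA) hintAB (hBA ▸ hcont2), Set.inter_comm, Set.inter_union_diff]
  -- common rpow facts
  have hpow : (0:ℝ) < ε ^ (2+s) := Real.rpow_pos_of_pos h0 _
  have h8 : (2:ℝ) ^ (2+s) ≤ 8 := by
    calc (2:ℝ) ^ (2+s) ≤ 2 ^ (3:ℝ) :=
          Real.rpow_le_rpow_of_exponent_le one_le_two (by linarith [hs.2])
      _ = 8 := by
          rw [show (3:ℝ) = ((3:ℕ):ℝ) by norm_num, Real.rpow_natCast]; norm_num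
  have hcube : ∀ c : ℝ, c * ε ^ (1-s) = c * ε^3 / ε^(2+s) := by
    intro c
    rw [show (1:ℝ)-s = 3-(2+s) by ring, Real.rpow_sub h0,
      show (3:ℝ) = ((3:ℕ):ℝ) by norm_num, Real.rpow_natCast]
    ring
  -- bound on A \ B
  have hP : ‖∫ t in A \ B, g t‖ ≤ 4 * ε ^ (1-s) := by
    rw [hAB]
    have hvol : volume (Ico (1+ε) b) < ⊤ := by
      rw [Real.volume_Ico]; exact ENNReal.ofReal_lt_top
    have hbound := norm_setIntegral_le_of_norm_le_const_ae' (μ := volume)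
      (f := g) (C := 2*ε/ε^(2+s)) hvol ?_
    · rw [measureReal_def, Real.volume_Ico, ENNReal.toReal_ofReal (by linarith)] at hbound
      refine hbound.trans ?_
      calc 2*ε/ε^(2+s) * (b - (1+ε)) ≤ 2*ε/ε^(2+s) * (2*ε^2) := by
            apply mul_le_mul_of_nonneg_left hb3 (by positivity)
        _ = 4 * ε^3 / ε^(2+s) := by ring
        _ = 4 * ε ^ (1-s) := (hcube 4).symm
    · apply ae_of_all
      rintro x ⟨hx1, hx2⟩
      have hx0 : (0:ℝ) < x := by linarith
      have hxabs : |x| = x := abs_of_pos hx0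
      have h1xabs : |1 - x| = x - 1 := by rw [abs_sub_comm]; exact abs_of_nonneg (by linarith)
      have hxs1 : (1:ℝ) ≤ x ^ s := Real.one_le_rpow (by linarith) hs.1.le
      have hxsx : x ^ s ≤ x := by
        have := Real.rpow_le_rpow_of_exponent_le (by linarith : (1:ℝ) ≤ x) hs.2.le
        rwa [Real.rpow_one] at this
      have hnum : |1 - x ^ s| = x ^ s - 1 := by
        rw [abs_sub_comm]; exact abs_of_nonneg (by linarith)
      have hεb : ε * b ≤ ε * 2 := mul_le_mul_of_nonneg_left hb2 h0.le
      have hεb' : b * (1-ε) = b - ε * b := by ring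
      have hb1' : x - 1 ≤ 2*ε := by linarith
      have hden : ε^(2+s) ≤ (x-1)^(2+s) :=
        Real.rpow_le_rpow h0.le (by linarith) (by linarith [hs.1])
      have hgx : ‖g x‖ = |1 - x ^ s| / (x-1)^(2+s) := by
        simp only [hg, hxabs, h1xabs, Real.norm_eq_abs, abs_div]
        rw [abs_of_nonneg (Real.rpow_nonneg (by linarith) _)]
      rw [hgx, hnum]
      exact div_le_div₀ (by positivity) (by linarith) hpow hden
  -- bound on B \ A
  have hQ : ‖∫ t in B \ A, g t‖ ≤ 8 * ε ^ (1-s) := by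
    rw [hBA]
    have hvol : volume (Ioc (1-ε) a) < ⊤ := by
      rw [Real.volume_Ioc]; exact ENNReal.ofReal_lt_top
    have hbound := norm_setIntegral_le_of_norm_le_const_ae' (μ := volume)
      (f := g) (C := 8*ε/ε^(2+s)) hvol ?_
    · rw [measureReal_def, Real.volume_Ioc, ENNReal.toReal_ofReal (by linarith)] at hbound
      refine hbound.trans ?_
      calc 8*ε/ε^(2+s) * (a - (1-ε)) ≤ 8*ε/ε^(2+s) * ε^2 := by
            apply mul_le_mul_of_nonneg_left ha4 (by positivity)
        _ = 8 * ε^3 / ε^(2+s) := by ring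
        _ = 8 * ε ^ (1-s) := (hcube 8).symm
    · apply ae_of_all
      rintro x ⟨hx1, hx2⟩
      have hx0 : (0:ℝ) < x := by linarith
      have hx3 : x < 1 := by linarith
      have hxabs : |x| = x := abs_of_pos hx0
      have h1xabs : |1 - x| = 1 - x := abs_of_nonneg (by linarith)
      have hxs1 : x ^ s ≤ 1 := Real.rpow_le_one hx0.le hx3.le hs.1.le
      have hxsx : x ≤ x ^ s := by
        have := Real.rpow_le_rpow_of_exponent_ge hx0 hx3.le hs.2.le
        rwa [Real.rpow_one] at this
      have hnum : |1 - x ^ s| = 1 - x ^ s := abs_of_nonneg (by linarith)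
      have hεa : ε * (1/2) ≤ ε * a := mul_le_mul_of_nonneg_left ha3 h0.le
      have hεa' : a * (1+ε) = a + ε * a := by ring
      have h1a : ε/2 ≤ 1 - x := by linarith
      have hden : ε^(2+s)/8 ≤ (1-x)^(2+s) := by
        have hd1 : (ε/2)^(2+s) ≤ (1-x)^(2+s) :=
          Real.rpow_le_rpow (by positivity) h1a (by linarith [hs.1])
        have hd2 : (ε/2)^(2+s) = ε^(2+s)/2^(2+s) :=
          Real.div_rpow h0.le (by norm_num : (0:ℝ) ≤ 2) _
        have hd3 : ε^(2+s)/8 ≤ ε^(2+s)/2^(2+s) :=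
          div_le_div_of_nonneg_left hpow.le (by positivity) h8
        rw [hd2] at hd1
        linarith
      have hgx : ‖g x‖ = |1 - x ^ s| / (1-x)^(2+s) := by
        simp only [hg, hxabs, h1xabs, Real.norm_eq_abs, abs_div]
        rw [abs_of_nonneg (Real.rpow_nonneg (by linarith) _)]
      rw [hgx, hnum]
      calc (1 - x ^ s) / (1-x)^(2+s) ≤ ε / (ε^(2+s)/8) :=
            div_le_div₀ h0.le (by linarith) (by positivity) hden
        _ = 8*ε/ε^(2+s) := by field_simp
  -- assemble
  have h2I : (2:ℝ) * ∫ t in A, g t = (∫ t in A \ B, g t) - ∫ t in B \ A, g t := by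
    linarith [hcov, hsplitA, hsplitB]
  have habs : ‖∫ t in A, g t‖ ≤ 6 * ε ^ (1-s) := by
    rw [Real.norm_eq_abs]
    rw [Real.norm_eq_abs] at hP hQ
    have h3 := abs_sub (∫ t in A \ B, g t) (∫ t in B \ A, g t)
    have h4 : |(2:ℝ) * ∫ t in A, g t| = 2 * |∫ t in A, g t| := by
      rw [abs_mul]; norm_num
    rw [h2I] at h4
    linarith
  calc ‖∫ t in A, g t‖ ≤ 6 * ε ^ (1-s) := habs
    _ ≤ 10 * ε ^ (1-s) := by
        have : (0:ℝ) ≤ ε ^ (1-s) := Real.rpow_nonneg h0.le _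
        linarith

theorem pv_integral_zero (s : ℝ) (hs : s ∈ Set.Ioo (0:ℝ) 1) :
    Tendsto (fun ε : ℝ =>
        ∫ t in (Set.Ioo (1 - ε) (1 + ε))ᶜ, (1 - |t| ^ s) / |1 - t| ^ (2 + s))
      (nhdsWithin 0 (Set.Ioi 0)) (nhds 0) := by
  have hev : ∀ᶠ ε in nhdsWithin 0 (Set.Ioi 0),
      ‖∫ t in (Set.Ioo (1 - ε) (1 + ε))ᶜ, (1 - |t| ^ s) / |1 - t| ^ (2 + s)‖
        ≤ 10 * ε ^ (1 - s) := by
    filter_upwards [Ioo_mem_nhdsGT_of_mem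
      (show (0:ℝ) ∈ Ico (0:ℝ) (1/2) from ⟨le_refl _, by norm_num⟩)] with ε hε
    exact pv_main_bound s ε hs hε.1 hε.2
  have hgt : Tendsto (fun ε : ℝ => 10 * ε ^ (1-s)) (nhdsWithin 0 (Set.Ioi 0)) (nhds 0) := by
    have h1 : Tendsto (fun ε : ℝ => ε ^ (1-s)) (nhds 0) (nhds 0) := by
      have := (Real.continuousAt_rpow_const 0 (1-s) (Or.inr (by linarith [hs.2]))).tendsto
      rwa [Real.zero_rpow ((by linarith [hs.2] : (0:ℝ) < 1-s).ne')] at this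
    have h2 := h1.const_mul (10:ℝ)
    rw [mul_zero] at h2
    exact h2.mono_left nhdsWithin_le_nhds
  exact squeeze_zero_norm' hev hgt
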